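/- nm-independence is symmetric: for all finite tuples a, b and finite C ⊆ X in a Polish structure (X,G), a is nm-independent from b over C if and only if b is nm-independent from a over C. -/

import Mathlib

/-- The pointwise stabilizer of a set `A ⊆ X` in `G`. -/
def pstab (G : Type*) {X : Type*} [Group G] [MulAction G X] (A : Set X) : Subgroup G where
  carrier := {g : G | ∀ x ∈ A, g • x = x}
  one_mem' := fun x _ => one_smul G x
  mul_mem' := by
    intro a b ha hb x hx
    rw [mul_smul, hb x hx, ha x hx]
  inv_mem' := by
    intro a ha x hx
    rw [inv_smul_eq_iff, ha x hx]

/-- `a` is nm-independent from `B` over `A`: the preimage under `π_A : G_A → o(a/A)`,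
`g ↦ g • a`, of the orbit `o(a/A ∪ B)` is non-meager in `π_A⁻¹[o(a/A)] = G_A`. -/
def NmInd (G : Type*) {X : Type*} [Group G] [TopologicalSpace G] [MulAction G X] {n : ℕ}
    (a : Fin n → X) (A B : Set X) : Prop :=
  ¬ IsMeagre {g : ↥(pstab G A) | (g • a : Fin n → X) ∈ MulAction.orbit ↥(pstab G (A ∪ B)) a}

lemma pstab_mem_iff {G X : Type*} [Group G] [MulAction G X] {A : Set X} {g : G} :
    g ∈ pstab G A ↔ ∀ x ∈ A, g • x = x := Iff.rfl

/-- Key combinatorial step: if `g ∈ G_C` moves `a` into the `G_{C∪b}`-orbit of `a`,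
then `g⁻¹` moves `b` into the `G_{C∪a}`-orbit of `b`. -/
lemma nmInd_aux {G X : Type*} [Group G] [MulAction G X]
    {n m : ℕ} (a : Fin n → X) (b : Fin m → X) (C : Set X)
    (g : ↥(pstab G C))
    (h : (g • a : Fin n → X) ∈ MulAction.orbit ↥(pstab G (C ∪ Set.range b)) a) :
    ((g⁻¹ : ↥(pstab G C)) • b : Fin m → X) ∈
      MulAction.orbit ↥(pstab G (C ∪ Set.range a)) b := by
  obtain ⟨h, hh⟩ := h
  -- hh : h • a = g • a  (as functions)
  have hha : ∀ i, (h : G) • a i = (g : G) • a i := by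
    intro i
    have := congrFun hh i
    exact this
  -- k := h⁻¹ * g fixes C ∪ range a
  have hk : ((h : G)⁻¹ * (g : G)) ∈ pstab G (C ∪ Set.range a) := by
    intro x hx
    rcases hx with hx | ⟨i, rfl⟩
    · rw [mul_smul, g.2 x hx, inv_smul_eq_iff, h.2 x (Or.inl hx)]
    · rw [mul_smul, ← hha i, inv_smul_smul]
  refine ⟨(⟨_, hk⟩ : ↥(pstab G (C ∪ Set.range a)))⁻¹, ?_⟩
  funext i
  have hb : (h : G) • b i = b i := h.2 (b i) (Or.inr ⟨i, rfl⟩)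
  show ((h : G)⁻¹ * (g : G))⁻¹ • b i = (g : G)⁻¹ • b i
  rw [mul_inv_rev, inv_inv, mul_smul, inv_smul_eq_iff, hb, smul_inv_smul]

/-- Symmetry of nm-independence in a Polish structure. -/
theorem nmInd_symm {G X : Type*} [Group G] [TopologicalSpace G]
    [IsTopologicalGroup G] [PolishSpace G] [MulAction G X] [FaithfulSMul G X]
    (hstab : ∀ x : X, IsClosed (MulAction.stabilizer G x : Set G))
    {n m : ℕ} (a : Fin n → X) (b : Fin m → X) (C : Finset X) :
    NmInd G a (C : Set X) (Set.range b) ↔ NmInd G b (C : Set X) (Set.range a) := by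
  set GC := ↥(pstab G (C : Set X))
  set Sa := {g : GC | (g • a : Fin n → X) ∈
    MulAction.orbit ↥(pstab G ((C : Set X) ∪ Set.range b)) a}
  set Sb := {g : GC | (g • b : Fin m → X) ∈
    MulAction.orbit ↥(pstab G ((C : Set X) ∪ Set.range a)) b}
  have hset : Sb = (fun g : GC => g⁻¹) ⁻¹' Sa := by
    ext g
    constructor
    · intro hg
      exact nmInd_aux b a (C : Set X) g hg
    · intro hg
      have := nmInd_aux a b (C : Set X) g⁻¹ hg
      simpa [Sb] using this
  have hcont : Continuous (fun g : GC => g⁻¹) := continuous_inv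
  have hopen : IsOpenMap (fun g : GC => g⁻¹) := (Homeomorph.inv GC).isOpenMap
  have hiff : IsMeagre Sa ↔ IsMeagre Sb := by
    constructor
    · intro hm
      rw [hset]
      exact hm.preimage_of_isOpenMap hcont hopen
    · intro hm
      have : IsMeagre ((fun g : GC => g⁻¹) ⁻¹' Sb) :=
        hm.preimage_of_isOpenMap hcont hopen
      have heq : (fun g : GC => g⁻¹) ⁻¹' Sb = Sa := by
        rw [hset]; ext g; exact iff_of_eq (congrArg (· ∈ Sa) (inv_inv g))
      rwa [heq] at this
  exact not_congr hiff
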